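/- Let A be a unital C*-algebra, 0 < q < 1, and x₁,…,xₙ ∈ A. In A ⊗ B(ℓ²(ℕ)), set Xⱼ = xⱼ ⊗ D for j = 1,…,n (D = Σ_k q^{k/2} E_{kk}) and X_{n+1} = 1 ⊗ W (W the weighted shift with weights √(1−q^{k+1})). Then 1 − Σ_{j=1}^{n+1} Xⱼ Xⱼ* = (1 − Σ_{j=1}^n xⱼxⱼ*) ⊗ Σ_{k≥0} q^k E_{kk}. -/

import Mathlib

open scoped TensorProduct

open InnerProductSpace in
lemma clm_ext_hilbertBasis {H : Type*} [NormedAddCommGroup H] [InnerProductSpace ℂ H]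
    [CompleteSpace H] (b : HilbertBasis ℕ ℂ H)
    {F : Type*} [NormedAddCommGroup F] [NormedSpace ℂ F]
    {f g : H →L[ℂ] F} (h : ∀ k : ℕ, f (b k) = g (b k)) : f = g := by
  refine ContinuousLinearMap.ext_on
    (Submodule.dense_iff_topologicalClosure_eq_top.mpr b.dense_span) ?_
  rintro _ ⟨k, rfl⟩
  exact h k

lemma vec_ext_hilbertBasis {H : Type*} [NormedAddCommGroup H] [InnerProductSpace ℂ H]
    [CompleteSpace H] (b : HilbertBasis ℕ ℂ H)
    {u v : H} (h : ∀ k : ℕ, inner ℂ u (b k) = (inner ℂ v (b k) : ℂ)) : u = v := by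
  refine ext_inner_right ℂ fun w => ?_
  have : (innerSL ℂ u : H →L[ℂ] ℂ) = innerSL ℂ v :=
    clm_ext_hilbertBasis b (fun k => h k)
  exact congrFun (congrArg DFunLike.coe this) w

open ContinuousLinearMap in
theorem double_suspension_radius_identity
    {A : Type*} [CStarAlgebra A]
    {H : Type*} [NormedAddCommGroup H] [InnerProductSpace ℂ H] [CompleteSpace H]
    (b : HilbertBasis ℕ ℂ H) (q : ℝ) (hq0 : 0 < q) (hq1 : q < 1)
    (n : ℕ) (x : Fin n → A)
    (D W E : H →L[ℂ] H)
    (hD : ∀ k : ℕ, D (b k) = ((Real.sqrt q ^ k : ℝ) : ℂ) • b k)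
    (hW : ∀ k : ℕ, W (b k) = ((Real.sqrt (1 - q ^ (k + 1)) : ℝ) : ℂ) • b (k + 1))
    (hE : ∀ k : ℕ, E (b k) = ((q ^ k : ℝ) : ℂ) • b k) :
    (1 : A ⊗[ℂ] (H →L[ℂ] H))
        - (∑ j : Fin n, (x j * star (x j)) ⊗ₜ[ℂ] (D ∘L adjoint D))
        - (1 : A) ⊗ₜ[ℂ] (W ∘L adjoint W)
      = ((1 : A) - ∑ j : Fin n, x j * star (x j)) ⊗ₜ[ℂ] E := by
  have hbo := b.orthonormal
  have hinner : ∀ k m : ℕ, (inner ℂ (b k) (b m) : ℂ) = if k = m then 1 else 0 := by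
    intro k m
    by_cases h : k = m
    · simp [h, hbo.1 m, inner_self_eq_norm_sq_to_K]
    · simp [h, hbo.2 h]
  -- adjoint of D on basis vectors
  have haD : ∀ k : ℕ, adjoint D (b k) = ((Real.sqrt q ^ k : ℝ) : ℂ) • b k := by
    intro k
    refine vec_ext_hilbertBasis b fun m => ?_
    rw [adjoint_inner_left, hD m, inner_smul_right, inner_smul_left, hinner]
    by_cases h : k = m
    · subst h; simp [Complex.conj_ofReal]
    · simp [h]
  -- adjoint of W on basis vectors
  have haW0 : adjoint W (b 0) = 0 := by
    refine vec_ext_hilbertBasis b fun m => ?_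
    rw [adjoint_inner_left, hW m, inner_smul_right, hinner]
    simp
  have haW : ∀ k : ℕ, adjoint W (b (k + 1)) =
      ((Real.sqrt (1 - q ^ (k + 1)) : ℝ) : ℂ) • b k := by
    intro k
    refine vec_ext_hilbertBasis b fun m => ?_
    rw [adjoint_inner_left, hW m, inner_smul_right, inner_smul_left, hinner, hinner]
    by_cases h : k = m
    · subst h; simp [Complex.conj_ofReal]
    · have h' : ¬ (k + 1 = m + 1) := by omega
      simp [h, h']
  -- D ∘L adjoint D = E
  have hDD : D ∘L adjoint D = E := by
    refine clm_ext_hilbertBasis b fun k => ?_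
    rw [ContinuousLinearMap.comp_apply, haD, map_smul, hD, hE, smul_smul]
    norm_cast
    rw [← mul_pow, Real.mul_self_sqrt hq0.le]
  -- W ∘L adjoint W = 1 - E
  have hWW : W ∘L adjoint W = 1 - E := by
    refine clm_ext_hilbertBasis b fun k => ?_
    cases k with
    | zero =>
      rw [ContinuousLinearMap.comp_apply, haW0, map_zero]
      simp [hE 0]
    | succ k =>
      rw [ContinuousLinearMap.comp_apply, haW, map_smul, hW, smul_smul]
      have hle : (0 : ℝ) ≤ 1 - q ^ (k + 1) := by
        have : q ^ (k + 1) < 1 := pow_lt_one₀ hq0.le hq1 (Nat.succ_ne_zero k)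
        linarith
      have : ((Real.sqrt (1 - q ^ (k + 1)) : ℝ) : ℂ) *
          ((Real.sqrt (1 - q ^ (k + 1)) : ℝ) : ℂ) = ((1 - q ^ (k + 1) : ℝ) : ℂ) := by
        norm_cast
        exact Real.mul_self_sqrt hle
      rw [this]
      simp only [ContinuousLinearMap.sub_apply, ContinuousLinearMap.one_apply, hE]
      push_cast
      rw [sub_smul, one_smul]
  rw [hDD, hWW]
  rw [← TensorProduct.sum_tmul, TensorProduct.tmul_sub, TensorProduct.sub_tmul,
    Algebra.TensorProduct.one_def]
  abel
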